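/- Reflection symmetry of optimal weights (Proposition): for every integer r ≥ 2, every l with 1 ≤ l ≤ r−1, and every function f : ℝ → ℝ, p^{r+l-1}_{r-1}[f](x_{j-1/2}) = Σ_{k=r-l}^{r-1} C^{r+l-1}_{l-1, r-1-k} · p^{r}_{k}[f](x_{j-1/2}); in other words, the (r+l−1, r−1)-optimal weights satisfy C^{r+l-1}_{r-1,k} = C^{r+l-1}_{l-1, r-1-k}. -/

import Mathlib

/-- Value at the midpoint `x₀ + (j - 1/2)·h` of the Lagrange interpolant of `f`
at the `a+1` equally spaced nodes `x_{j+b-a}, …, x_{j+b}` where `x_m = x₀ + m·h`. -/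
noncomputable def Pval (h x₀ : ℝ) (j a b : ℤ) (f : ℝ → ℝ) : ℝ :=
  (Lagrange.interpolate (Finset.Icc (j + b - a) (j + b)) (fun m : ℤ => x₀ + (m : ℝ) * h)
    (fun m : ℤ => f (x₀ + (m : ℝ) * h))).eval (x₀ + ((j : ℝ) - 1 / 2) * h)

/-- The general optimal weights `C^{r+l-1}_{l-1,k}`, for `1 ≤ l ≤ r` and `0 ≤ k ≤ l-1`. -/
noncomputable def C1 (r l k : ℕ) : ℝ :=
  (1 / 2 ^ (2 * l)) * (((r : ℝ) + (l : ℝ)) / (l : ℝ)) *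
    (((l : ℝ) - (k : ℝ)) / ((r : ℝ) - (k : ℝ))) *
    (Nat.choose l k : ℝ) * ((Nat.choose r k : ℝ))⁻¹ * (Nat.choose (2 * l) l : ℝ) *
    ((Nat.choose (l + r) r : ℝ))⁻¹ * (Nat.choose (2 * r) (2 * k + 1) : ℝ)

open Finset Polynomial Lagrange


section helpers

/-- alternating Pascal summation -/
lemma alt_pascal (s : ℕ) (g : ℕ → ℝ) :
    ∑ t ∈ range (s+2), (-1:ℝ)^t * ((s+1).choose t) * g t
      = ∑ t ∈ range (s+1), (-1:ℝ)^t * (s.choose t) * (g t - g (t+1)) := by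
  have h1 : ∑ t ∈ range (s+2), (-1:ℝ)^t * ((s+1).choose t) * g t
      = ∑ t ∈ range (s+1), (-1:ℝ)^(t+1) * ((s+1).choose (t+1)) * g (t+1)
        + (-1:ℝ)^0 * ((s+1).choose 0) * g 0 := Finset.sum_range_succ' _ _
  have h2 : ∑ t ∈ range (s+2), (-1:ℝ)^t * (s.choose t) * g t
      = ∑ t ∈ range (s+1), (-1:ℝ)^(t+1) * (s.choose (t+1)) * g (t+1)
        + (-1:ℝ)^0 * (s.choose 0) * g 0 := Finset.sum_range_succ' _ _
  have h3 : ∑ t ∈ range (s+2), (-1:ℝ)^t * (s.choose t) * g t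
      = ∑ t ∈ range (s+1), (-1:ℝ)^t * (s.choose t) * g t := by
    rw [Finset.sum_range_succ]
    simp [Nat.choose_eq_zero_of_lt (Nat.lt_succ_self s)]
  calc ∑ t ∈ range (s+2), (-1:ℝ)^t * ((s+1).choose t) * g t
      = ∑ t ∈ range (s+1), (-1:ℝ)^(t+1) * ((s+1).choose (t+1)) * g (t+1)
        + (-1:ℝ)^0 * ((s+1).choose 0) * g 0 := h1
    _ = (∑ t ∈ range (s+1), (-1:ℝ)^(t+1) * (s.choose (t+1)) * g (t+1)
        + (-1:ℝ)^0 * (s.choose 0) * g 0)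
        + ∑ t ∈ range (s+1), (-1:ℝ)^(t+1) * (s.choose t) * g (t+1) := by
        have : ∀ t ∈ range (s+1), (-1:ℝ)^(t+1) * ((s+1).choose (t+1)) * g (t+1)
            = (-1:ℝ)^(t+1) * (s.choose (t+1)) * g (t+1)
              + (-1:ℝ)^(t+1) * (s.choose t) * g (t+1) := by
          intro t _
          rw [Nat.choose_succ_succ']
          push_cast
          ring
        rw [Finset.sum_congr rfl this, Finset.sum_add_distrib]
        simp [Nat.choose_zero_right]
        ring
    _ = ∑ t ∈ range (s+1), (-1:ℝ)^t * (s.choose t) * g t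
        - ∑ t ∈ range (s+1), (-1:ℝ)^t * (s.choose t) * g (t+1) := by
        rw [← h2, h3]
        have : ∀ t, (-1:ℝ)^(t+1) * (s.choose t) * g (t+1)
            = -((-1:ℝ)^t * (s.choose t) * g (t+1)) := by intro t; ring
        simp only [this]
        rw [Finset.sum_neg_distrib]
        ring
    _ = ∑ t ∈ range (s+1), (-1:ℝ)^t * (s.choose t) * (g t - g (t+1)) := by
        rw [← Finset.sum_sub_distrib]
        apply Finset.sum_congr rfl
        intro t _
        ring

end helpers

section phi

variable (h x₀ : ℝ)

/-- the big sum identity -/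
lemma phi_identity (x : ℝ) (lo : ℤ) (n : ℕ) :
    ∀ s : ℕ, s ≤ n →
    ∑ t ∈ range (s+1), (-1:ℝ)^t * (s.choose t) *
      ∏ i ∈ Icc lo (lo + s - t - 1) ∪ Icc (lo + n - t + 1) (lo + n), (x - (x₀ + (i:ℝ) * h))
      = h^s * ∏ u ∈ range s, ((n:ℝ) - u) := by
  intro s
  induction s with
  | zero =>
    intro _
    have e1 : Icc lo (lo + 0 - 0 - 1) = (∅ : Finset ℤ) := Finset.Icc_eq_empty (by omega)
    have e2 : Icc (lo + n - 0 + 1) (lo + n) = (∅ : Finset ℤ) := Finset.Icc_eq_empty (by omega)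
    simp [e1, e2]
  | succ s ih =>
    intro hsn
    have hs : s ≤ n := by omega
    -- step
    set g : ℕ → ℝ := fun t =>
      ∏ i ∈ Icc lo (lo + (s+1) - t - 1) ∪ Icc (lo + n - t + 1) (lo + n), (x - (x₀ + (i:ℝ) * h))
      with hg
    have key : ∀ t ∈ range (s+1), g t - g (t+1)
        = ((n:ℝ) - s) * h * ∏ i ∈ Icc lo (lo + s - t - 1) ∪ Icc (lo + n - t + 1) (lo + n),
            (x - (x₀ + (i:ℝ) * h)) := by
      intro t ht
      rw [Finset.mem_range] at ht
      have h1 : Icc lo (lo + (s+1) - t - 1) ∪ Icc (lo + n - t + 1) (lo + n)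
          = insert (lo + s - t) (Icc lo (lo + s - t - 1) ∪ Icc (lo + n - t + 1) (lo + n)) := by
        ext i
        simp only [Finset.mem_union, Finset.mem_Icc, Finset.mem_insert]
        omega
      have h2 : Icc lo (lo + (s+1) - (t+1) - 1) ∪ Icc (lo + n - (t+1) + 1) (lo + n)
          = insert (lo + n - t) (Icc lo (lo + s - t - 1) ∪ Icc (lo + n - t + 1) (lo + n)) := by
        ext i
        simp only [Finset.mem_union, Finset.mem_Icc, Finset.mem_insert]
        omega
      have hm1 : (lo + s - t : ℤ) ∉ Icc lo (lo + s - t - 1) ∪ Icc (lo + n - t + 1) (lo + n) := by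
        simp only [Finset.mem_union, Finset.mem_Icc]
        omega
      have hm2 : (lo + n - t : ℤ) ∉ Icc lo (lo + s - t - 1) ∪ Icc (lo + n - t + 1) (lo + n) := by
        simp only [Finset.mem_union, Finset.mem_Icc]
        omega
      rw [hg]
      simp only
      push_cast
      rw [h1, h2, Finset.prod_insert hm1, Finset.prod_insert hm2, ← sub_mul]
      congr 1
      push_cast
      ring
    calc ∑ t ∈ range (s+1+1), (-1:ℝ)^t * ((s+1).choose t) * g t
        = ∑ t ∈ range (s+1), (-1:ℝ)^t * (s.choose t) * (g t - g (t+1)) := alt_pascal s g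
      _ = ((n:ℝ) - s) * h * ∑ t ∈ range (s+1), (-1:ℝ)^t * (s.choose t) *
            ∏ i ∈ Icc lo (lo + s - t - 1) ∪ Icc (lo + n - t + 1) (lo + n),
              (x - (x₀ + (i:ℝ) * h)) := by
          rw [Finset.mul_sum]
          apply Finset.sum_congr rfl
          intro t ht
          rw [key t ht]
          ring
      _ = h^(s+1) * ∏ u ∈ range (s+1), ((n:ℝ) - u) := by
          rw [ih hs, Finset.prod_range_succ]
          ring

end phi

section decomp

variable (h x₀ : ℝ)

lemma vv_inj (hh : h ≠ 0) (S : Set ℤ) : Set.InjOn (fun m : ℤ => x₀ + (m:ℝ) * h) S := by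
  intro a _ b _ hab
  simp only at hab
  have : (a:ℝ) = b := by
    have := mul_right_cancel₀ hh (by linarith : (a:ℝ) * h = b * h)
    exact this
  exact_mod_cast this

lemma decomp (hh : h ≠ 0) (F : ℤ → ℝ) (lo : ℤ) (A d : ℕ) :
    (∑ t ∈ range (d+1),
      Polynomial.C ((-1:ℝ)^t * (d.choose t) * (h^d * ∏ u ∈ range d, ((A+d:ℝ) - u))⁻¹) *
        (nodal (Icc lo (lo + d - t - 1) ∪ Icc (lo + A + d - t + 1) (lo + A + d))
            (fun m : ℤ => x₀ + (m:ℝ) * h) *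
          interpolate (Icc (lo + A + d - t - A) (lo + A + d - t)) (fun m : ℤ => x₀ + (m:ℝ) * h) F))
      = interpolate (Icc lo (lo + A + d)) (fun m : ℤ => x₀ + (m:ℝ) * h) F := by
  set vv : ℤ → ℝ := fun m : ℤ => x₀ + (m:ℝ) * h with hvv
  have hprodne : (∏ u ∈ range d, ((A+d:ℝ) - u)) ≠ 0 := by
    apply Finset.prod_ne_zero_iff.mpr
    intro u hu
    rw [Finset.mem_range] at hu
    have h2 : u < A + d := by omega
    have h3 := (Nat.cast_lt (α := ℝ)).mpr h2
    push_cast at h3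
    linarith
  refine Lagrange.eq_interpolate_of_eval_eq F (vv_inj h x₀ hh _) ?_ ?_
  · -- degree
    have cardIcc : (Icc lo (lo + A + d)).card = A + d + 1 := by
      rw [Int.card_Icc]; omega
    rw [cardIcc]
    calc (∑ t ∈ range (d+1), _ : ℝ[X]).degree ≤ _ := Polynomial.degree_le_natDegree
      _ < ((A + d + 1 : ℕ) : WithBot ℕ) := by
        rw [Nat.cast_lt]
        have : (∑ t ∈ range (d+1),
            Polynomial.C ((-1:ℝ)^t * (d.choose t) * (h^d * ∏ u ∈ range d, ((A+d:ℝ) - u))⁻¹) *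
              (nodal (Icc lo (lo + d - t - 1) ∪ Icc (lo + A + d - t + 1) (lo + A + d)) vv *
                interpolate (Icc (lo + A + d - t - A) (lo + A + d - t)) vv F)).natDegree ≤ A + d := by
          apply Polynomial.natDegree_sum_le_of_forall_le
          intro t ht
          rw [Finset.mem_range] at ht
          calc (Polynomial.C _ * (nodal _ vv * interpolate _ vv F)).natDegree
              ≤ (Polynomial.C _).natDegree + (nodal _ vv * interpolate _ vv F).natDegree :=
                Polynomial.natDegree_mul_le
            _ ≤ 0 + ((nodal (Icc lo (lo + d - t - 1) ∪ Icc (lo + A + d - t + 1) (lo + A + d)) vv).natDegree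
                + (interpolate (Icc (lo + A + d - t - A) (lo + A + d - t)) vv F).natDegree) := by
                gcongr
                · exact le_of_eq (Polynomial.natDegree_C _)
                · exact Polynomial.natDegree_mul_le
            _ ≤ 0 + (d + A) := by
                gcongr
                · rw [Lagrange.natDegree_nodal]
                  calc (Icc lo (lo + d - t - 1) ∪ Icc (lo + A + d - t + 1) (lo + A + d)).card
                      ≤ (Icc lo (lo + d - t - 1)).card + (Icc (lo + A + d - t + 1) (lo + A + d)).card :=
                        Finset.card_union_le _ _
                    _ ≤ d := by rw [Int.card_Icc, Int.card_Icc]; omega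
                · apply Polynomial.natDegree_le_iff_degree_le.mpr
                  calc (interpolate (Icc (lo + A + d - t - A) (lo + A + d - t)) vv F).degree
                      ≤ ((Icc (lo + A + d - t - A) (lo + A + d - t)).card - 1 : ℕ) :=
                        Lagrange.degree_interpolate_le _ (vv_inj h x₀ hh _)
                    _ ≤ (A : WithBot ℕ) := by
                        have hc : ((Icc (lo + A + d - t - A) (lo + A + d - t)).card - 1) = A := by
                          rw [Int.card_Icc]; omega
                        rw [hc]
            _ ≤ A + d := by omega
        omega
  · -- eval at nodes
    intro i hi
    rw [Finset.mem_Icc] at hi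
    rw [Polynomial.eval_finset_sum]
    have term_eq : ∀ t ∈ range (d+1),
        Polynomial.eval (vv i)
          (Polynomial.C ((-1:ℝ)^t * (d.choose t) * (h^d * ∏ u ∈ range d, ((A+d:ℝ) - u))⁻¹) *
            (nodal (Icc lo (lo + d - t - 1) ∪ Icc (lo + A + d - t + 1) (lo + A + d)) vv *
              interpolate (Icc (lo + A + d - t - A) (lo + A + d - t)) vv F))
        = ((-1:ℝ)^t * (d.choose t) * (h^d * ∏ u ∈ range d, ((A+d:ℝ) - u))⁻¹) *
            (∏ i' ∈ Icc lo (lo + d - t - 1) ∪ Icc (lo + A + d - t + 1) (lo + A + d), (vv i - vv i'))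
            * F i := by
      intro t ht
      rw [Polynomial.eval_mul, Polynomial.eval_mul, Polynomial.eval_C, Lagrange.eval_nodal]
      by_cases hmem : i ∈ Icc (lo + A + d - t - A) (lo + A + d - t)
      · rw [Lagrange.eval_interpolate_at_node _ (vv_inj h x₀ hh _) hmem]
        ring
      · rw [Finset.mem_Icc] at hmem
        have hzero : (∏ i' ∈ Icc lo (lo + d - t - 1) ∪ Icc (lo + A + d - t + 1) (lo + A + d),
            (vv i - vv i')) = 0 := by
          apply Finset.prod_eq_zero (i := i)
          · simp only [Finset.mem_union, Finset.mem_Icc]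
            omega
          · ring
        rw [hzero]
        ring
    rw [Finset.sum_congr rfl term_eq]
    have : ∑ t ∈ range (d+1),
        ((-1:ℝ)^t * (d.choose t) * (h^d * ∏ u ∈ range d, ((A+d:ℝ) - u))⁻¹) *
          (∏ i' ∈ Icc lo (lo + d - t - 1) ∪ Icc (lo + A + d - t + 1) (lo + A + d), (vv i - vv i'))
          * F i
        = ((h^d * ∏ u ∈ range d, ((A+d:ℝ) - u))⁻¹ *
            ∑ t ∈ range (d+1), (-1:ℝ)^t * (d.choose t) *
              ∏ i' ∈ Icc lo (lo + d - t - 1) ∪ Icc (lo + A + d - t + 1) (lo + A + d), (vv i - vv i'))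
          * F i := by
      rw [Finset.mul_sum]
      rw [Finset.sum_mul]
      apply Finset.sum_congr rfl
      intro t _
      ring
    rw [this]
    have hphi := phi_identity h x₀ (vv i) lo (A + d) d (by omega)
    have hIcc : (lo : ℤ) + (A + d : ℕ) = lo + A + d := by push_cast; ring
    rw [hIcc] at hphi
    push_cast at hphi ⊢
    rw [hphi]
    rw [inv_mul_cancel₀ (by positivity)]
    · ring

end decomp

section prods

noncomputable def Dodd (m : ℕ) : ℝ := (Nat.factorial (2*m) : ℝ) / (2^m * (Nat.factorial m : ℝ))

lemma Dodd_pos (m : ℕ) : 0 < Dodd m := by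
  unfold Dodd
  positivity

lemma Dodd_succ (p : ℕ) : Dodd (p+1) = Dodd p * (2*(p:ℝ)+1) := by
  unfold Dodd
  have h1 : 2*(p+1) = (2*p+1)+1 := by omega
  rw [h1, Nat.factorial_succ, Nat.factorial_succ, Nat.factorial_succ]
  push_cast
  have h2 : (Nat.factorial (2*p) : ℝ) ≠ 0 := by positivity
  have h3 : (Nat.factorial p : ℝ) ≠ 0 := by positivity
  field_simp
  ring

lemma oddprod : ∀ (q p : ℕ), ∏ m ∈ range q, (2*((p:ℝ)+(q:ℝ)) - 2*(m:ℝ) - 1) = Dodd (p+q) / Dodd p := by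
  intro q
  induction q with
  | zero => intro p; simp; rw [div_self (ne_of_gt (Dodd_pos p))]
  | succ q ih =>
    intro p
    rw [Finset.prod_range_succ]
    have step : ∏ m ∈ range q, (2*((p:ℝ)+(q+1:ℕ)) - 2*(m:ℝ) - 1)
        = ∏ m ∈ range q, (2*(((p+1:ℕ):ℝ)+(q:ℝ)) - 2*(m:ℝ) - 1) := by
      apply Finset.prod_congr rfl
      intro m _
      push_cast
      ring
    rw [step, ih (p+1)]
    have e1 : p + 1 + q = p + (q+1) := by omega
    rw [e1, Dodd_succ]
    have h2 := Dodd_pos p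
    have h3 := Dodd_pos (p + (q+1))
    have e2 : (2*((p:ℝ)+((q+1:ℕ):ℝ)) - 2*(q:ℝ) - 1) = 2*(p:ℝ)+1 := by push_cast; ring
    rw [e2]
    field_simp

lemma fallprod : ∀ (d p : ℕ), ∏ u ∈ range d, (((p:ℝ)+(d:ℝ)) - u) = (Nat.factorial (p+d) : ℝ) / (Nat.factorial p : ℝ) := by
  intro d
  induction d with
  | zero => intro p; simp; rw [div_self (by positivity : (Nat.factorial p : ℝ) ≠ 0)]
  | succ d ih =>
    intro p
    rw [Finset.prod_range_succ]
    have step : ∏ u ∈ range d, (((p:ℝ)+((d+1:ℕ):ℝ)) - u)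
        = ∏ u ∈ range d, ((((p+1:ℕ):ℝ)+(d:ℝ)) - u) := by
      apply Finset.prod_congr rfl
      intro u _
      push_cast
      ring
    rw [step, ih (p+1)]
    have e1 : p + 1 + d = p + (d+1) := by omega
    rw [e1]
    have e2 : p + (d+1) = (p+d)+1 := by omega
    have h3 : (Nat.factorial p : ℝ) ≠ 0 := by positivity
    have h4 : (Nat.factorial (p+1) : ℝ) ≠ 0 := by positivity
    rw [e2, Nat.factorial_succ, Nat.factorial_succ]
    push_cast
    field_simp
    ring

lemma prod_Icc_int (g : ℤ → ℝ) : ∀ (c : ℕ) (a : ℤ), ∏ i ∈ Icc a (a + c - 1), g i = ∏ m ∈ range c, g (a + m) := by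
  intro c
  induction c with
  | zero => intro a; rw [Finset.Icc_eq_empty (by omega)]; simp
  | succ c ih =>
    intro a
    have e1 : Icc a (a + (c+1:ℕ) - 1) = insert (a + c) (Icc a (a + c - 1)) := by
      ext i
      simp only [Finset.mem_Icc, Finset.mem_insert]
      omega
    rw [e1, Finset.prod_insert (by simp only [Finset.mem_Icc]; omega), ih, Finset.prod_range_succ]
    ring

end prods

lemma final_scalar (r d t k : ℕ) (hr : r = k + 1 + t) (hd : t ≤ d) :
    C1 r (d+1) t
      = (d.choose t : ℝ) * ((Nat.factorial r : ℝ) / (Nat.factorial (r+d) : ℝ)) * (1/2^d)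
        * (Dodd (d+1) / Dodd (t+1)) * (Dodd r / Dodd (k+1)) := by
  obtain ⟨a, rfl⟩ : ∃ a, d = t + a := ⟨d - t, by omega⟩
  subst hr
  unfold C1 Dodd
  rw [Nat.cast_choose ℝ (show t ≤ (t+a)+1 by omega),
      Nat.cast_choose ℝ (show t ≤ k+1+t by omega),
      Nat.cast_choose ℝ (show (t+a)+1 ≤ 2*((t+a)+1) by omega),
      Nat.cast_choose ℝ (show k+1+t ≤ ((t+a)+1)+(k+1+t) by omega),
      Nat.cast_choose ℝ (show 2*t+1 ≤ 2*(k+1+t) by omega),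
      Nat.cast_choose ℝ (show t ≤ t+a by omega)]
  rw [show (t+a)+1 - t = a+1 from by omega,
      show k+1+t - t = k+1 from by omega,
      show 2*((t+a)+1) - ((t+a)+1) = (t+a)+1 from by omega,
      show ((t+a)+1)+(k+1+t) - (k+1+t) = (t+a)+1 from by omega,
      show 2*(k+1+t) - (2*t+1) = 2*k+1 from by omega,
      show t+a - t = a from by omega]
  rw [show Nat.factorial (2*(t+1)) = (2*t+2) * Nat.factorial (2*t+1) from by
        rw [show 2*(t+1) = (2*t+1)+1 from by omega, Nat.factorial_succ],
      show Nat.factorial (2*(k+1)) = (2*k+2) * Nat.factorial (2*k+1) from by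
        rw [show 2*(k+1) = (2*k+1)+1 from by omega, Nat.factorial_succ],
      show Nat.factorial (((t+a)+1)+(k+1+t)) = (((t+a)+1)+(k+1+t)) * Nat.factorial ((k+1+t)+(t+a)) from by
        rw [show ((t+a)+1)+(k+1+t) = ((k+1+t)+(t+a))+1 from by omega, Nat.factorial_succ],
      Nat.factorial_succ (t+a),
      Nat.factorial_succ t,
      Nat.factorial_succ k,
      Nat.factorial_succ a]
  have n1 : (Nat.factorial t : ℝ) ≠ 0 := by positivity
  have n2 : (Nat.factorial a : ℝ) ≠ 0 := by positivity
  have n3 : (Nat.factorial k : ℝ) ≠ 0 := by positivity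
  have n4 : (Nat.factorial (t+a) : ℝ) ≠ 0 := by positivity
  have n5 : (Nat.factorial (2*t+1) : ℝ) ≠ 0 := by positivity
  have n6 : (Nat.factorial (2*k+1) : ℝ) ≠ 0 := by positivity
  have n7 : (Nat.factorial (2*((t+a)+1)) : ℝ) ≠ 0 := by positivity
  have n8 : (Nat.factorial (2*(k+1+t)) : ℝ) ≠ 0 := by positivity
  have n9 : (Nat.factorial ((k+1+t)+(t+a)) : ℝ) ≠ 0 := by positivity
  have n10 : (Nat.factorial (k+1+t) : ℝ) ≠ 0 := by positivity
  have n11 : ((k:ℝ)+1+t) - t ≠ 0 := by push_cast; intro hc; nlinarith [Nat.cast_nonneg (α := ℝ) k]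
  push_cast
  rw [show ((k:ℝ)+1+(t:ℝ)) - (t:ℝ) = (k:ℝ)+1 from by ring]
  field_simp
  ring

lemma scalar_full (h x₀ : ℝ) (hh : h ≠ 0) (j lo : ℤ) (r d t k : ℕ)
    (hlo : lo = j - (d+1)) (hk : r = k+1+t) (ht : t ≤ d) :
    (-1:ℝ)^t * (d.choose t) * (h^d * ∏ u ∈ range d, ((r:ℝ)+(d:ℝ) - (u:ℝ)))⁻¹ *
      ∏ i ∈ Icc lo (lo + (d:ℤ) - (t:ℤ) - 1) ∪ Icc (lo + (r:ℤ) + (d:ℤ) - (t:ℤ) + 1) (lo + (r:ℤ) + (d:ℤ)),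
        ((x₀ + ((j:ℝ) - 1/2)*h) - (x₀ + (i:ℝ)*h))
    = C1 r (d+1) t := by
  obtain ⟨a, rfl⟩ : ∃ a, d = t + a := ⟨d - t, by omega⟩
  have hdisj : Disjoint (Icc lo (lo + ((t+a:ℕ):ℤ) - (t:ℤ) - 1))
      (Icc (lo + (r:ℤ) + ((t+a:ℕ):ℤ) - (t:ℤ) + 1) (lo + (r:ℤ) + ((t+a:ℕ):ℤ))) := by
    rw [Finset.disjoint_left]
    intro i hi1 hi2
    rw [Finset.mem_Icc] at hi1 hi2
    omega
  rw [Finset.prod_union hdisj]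
  -- first product
  have e1 : Icc lo (lo + ((t+a:ℕ):ℤ) - (t:ℤ) - 1) = Icc lo (lo + (a:ℕ) - 1) := by
    congr 1; push_cast; ring
  have p1 : ∏ i ∈ Icc lo (lo + (a:ℕ) - 1), ((x₀ + ((j:ℝ) - 1/2)*h) - (x₀ + (i:ℝ)*h))
      = (h/2)^a * (Dodd (t+1+a) / Dodd (t+1)) := by
    rw [prod_Icc_int]
    have step : ∏ m ∈ range a, ((x₀ + ((j:ℝ) - 1/2)*h) - (x₀ + (((lo + (m:ℤ)) : ℤ):ℝ)*h))
        = ∏ m ∈ range a, ((2*(((t+1:ℕ):ℝ)+(a:ℝ)) - 2*(m:ℝ) - 1) * (h/2)) := by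
      apply Finset.prod_congr rfl
      intro m _
      rw [hlo]
      push_cast
      ring
    rw [step, Finset.prod_mul_distrib, Finset.prod_const, Finset.card_range, oddprod a (t+1)]
    ring
  -- second product
  have e2 : Icc (lo + (r:ℤ) + ((t+a:ℕ):ℤ) - (t:ℤ) + 1) (lo + (r:ℤ) + ((t+a:ℕ):ℤ))
      = Icc (j + (k:ℤ) + 1) ((j + (k:ℤ) + 1) + (t:ℕ) - 1) := by
    congr 1 <;> (rw [hlo]; push_cast; omega)
  have p2 : ∏ i ∈ Icc (j + (k:ℤ) + 1) ((j + (k:ℤ) + 1) + (t:ℕ) - 1),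
        ((x₀ + ((j:ℝ) - 1/2)*h) - (x₀ + (i:ℝ)*h))
      = (-(h/2))^t * (Dodd r / Dodd (k+1)) := by
    rw [prod_Icc_int]
    have refl1 : ∏ m ∈ range t, (2*(((k+1:ℕ):ℝ))+2*(m:ℝ)+1)
        = ∏ m ∈ range t, (2*(((k+1:ℕ):ℝ)+(t:ℝ)) - 2*(m:ℝ) - 1) := by
      rw [← Finset.prod_range_reflect (fun m => (2*(((k+1:ℕ):ℝ))+2*(m:ℝ)+1)) t]
      apply Finset.prod_congr rfl
      intro m hm
      rw [Finset.mem_range] at hm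
      have h5 : ((t - 1 - m : ℕ) : ℝ) = (t:ℝ) - 1 - m := by
        have e : t - 1 - m = t - (m+1) := by omega
        rw [e, Nat.cast_sub (by omega)]
        push_cast
        ring
      rw [h5]
      ring
    have : ∏ m ∈ range t, ((x₀ + ((j:ℝ) - 1/2)*h) - (x₀ + (((j + (k:ℤ) + 1 + (m:ℤ)) : ℤ):ℝ)*h))
        = ∏ m ∈ range t, ((2*(((k+1:ℕ):ℝ))+2*(m:ℝ)+1) * (-(h/2))) := by
      apply Finset.prod_congr rfl
      intro m _
      push_cast
      ring
    rw [this, Finset.prod_mul_distrib, Finset.prod_const, Finset.card_range, refl1,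
        oddprod t (k+1), show (k+1)+t = r from by omega]
    ring
  rw [e1, p1, e2, p2, fallprod (t+a) r, final_scalar r (t+a) t k hk ht]
  have hDt := Dodd_pos (t+1)
  have hDk := Dodd_pos (k+1)
  have hDr := Dodd_pos r
  have hDd := Dodd_pos ((t+a)+1)
  have e3 : t+1+a = (t+a)+1 := by omega
  rw [e3]
  have hfr : (Nat.factorial r : ℝ) ≠ 0 := by positivity
  have hfrd : (Nat.factorial (r+(t+a)) : ℝ) ≠ 0 := by positivity
  have hm1 : (-(h/2))^t = (-1:ℝ)^t * (h/2)^t := by rw [neg_pow]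
  rw [hm1]
  field_simp
  ring_nf
  rw [show ((-1:ℝ))^(t*2) = 1 from by rw [pow_mul']; norm_num]
  have e4 : ((1:ℝ)/2)^t * 2^t = 1 := by rw [← mul_pow]; norm_num
  have e5 : ((1:ℝ)/2)^a * 2^a = 1 := by rw [← mul_pow]; norm_num
  linear_combination (((t + a).choose t : ℝ) * h ^ t * h ^ a * (1/2)^a * 2^a) * e4 + (((t + a).choose t : ℝ) * h ^ t * h ^ a) * e5

/-- Reflection symmetry of optimal weights: the `(r+l-1, r-1)`-optimal weights
are `C^{r+l-1}_{r-1,k} = C^{r+l-1}_{l-1, r-1-k}`, i.e. `p^{r+l-1}_{r-1}` at the midpoint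
equals `Σ_{k=r-l}^{r-1} C^{r+l-1}_{l-1, r-1-k} · p^r_k`. -/
theorem reflection_symmetry_optimal_weights (h x₀ : ℝ) (hh : 0 < h) (j : ℤ) (r : ℕ)
    (hr : 2 ≤ r) (l : ℕ) (hl1 : 1 ≤ l) (hl2 : l ≤ r - 1) (f : ℝ → ℝ) :
    Pval h x₀ j ((r : ℤ) + (l : ℤ) - 1) ((r : ℤ) - 1) f =
      ∑ k ∈ Finset.Icc (r - l) (r - 1), C1 r l (r - 1 - k) * Pval h x₀ j (r : ℤ) (k : ℤ) f := by
  obtain ⟨d, rfl⟩ : ∃ d, l = d + 1 := ⟨l - 1, by omega⟩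
  have hrd : d + 2 ≤ r := by omega
  set lo : ℤ := j - (d + 1) with hlo
  have hne : h ≠ 0 := ne_of_gt hh
  unfold Pval
  have hIccL : Finset.Icc (j + ((r:ℤ)-1) - ((r:ℤ)+((d+1:ℕ):ℤ)-1)) (j + ((r:ℤ)-1))
      = Finset.Icc lo (lo + (r:ℕ) + (d:ℕ)) := by
    congr 1 <;> (rw [hlo]; push_cast; ring)
  rw [hIccL, ← decomp h x₀ hne (fun m : ℤ => f (x₀ + (m:ℝ) * h)) lo r d, Polynomial.eval_finset_sum]
  apply Finset.sum_nbij' (fun t => r - 1 - t) (fun k => r - 1 - k)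
  · intro t ht
    rw [Finset.mem_range] at ht
    rw [Finset.mem_Icc]
    omega
  · intro k hk
    rw [Finset.mem_Icc] at hk
    rw [Finset.mem_range]
    omega
  · intro t ht
    rw [Finset.mem_range] at ht
    omega
  · intro k hk
    rw [Finset.mem_Icc] at hk
    omega
  · intro t ht
    rw [Finset.mem_range] at ht
    set k : ℕ := r - 1 - t with hkdef
    have hk : r = k + 1 + t := by omega
    rw [Polynomial.eval_mul, Polynomial.eval_mul, Polynomial.eval_C, Lagrange.eval_nodal]
    have hIccS : Finset.Icc (lo + (r:ℕ) + (d:ℕ) - (t:ℕ) - (r:ℕ)) (lo + (r:ℕ) + (d:ℕ) - (t:ℕ))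
        = Finset.Icc (j + (k:ℤ) - (r:ℕ)) (j + (k:ℤ)) := by
      congr 1 <;> (rw [hlo]; push_cast; omega)
    rw [hIccS]
    have htarget : r - 1 - k = t := by omega
    rw [htarget]
    rw [← scalar_full h x₀ hne j lo r d t k hlo hk (by omega)]
    ring
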